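/- Let n ∈ (0,2), r₁ > 0, and R : (0,∞) → [r₁, r₂] measurable. Then ∫₀^∞ G(x,z) dx = (z^{n-1}/R(z)) e^{∫₀^z v/R(v) dv} ∫_z^∞ a^{2-n} e^{-∫₀^a v/R(v) dv} da, where G(x,z) = c₋(z)·1_{x≤z} + c₊(z) v₊(x)·1_{x>z} is the Green function kernel with c₊(z) = (z^{n-1}/R(z)) e^{∫₀^z v/R(v) dv}, c₋(z) = c₊(z) v₊(z), and v₊(x) = ∫_x^∞ u^{1-n} e^{-∫₀^u v/R(v) dv} du. -/

import Mathlib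

open Real MeasureTheory

theorem stmt18 (n r₁ r₂ : ℝ) (hn : n ∈ Set.Ioo (0:ℝ) 2) (hr : 0 < r₁) (hr' : r₁ ≤ r₂)
    (R : ℝ → ℝ) (hR : Measurable R) (hRb : ∀ x, 0 < x → R x ∈ Set.Icc r₁ r₂)
    (vplus cplus : ℝ → ℝ)
    (hv : ∀ x : ℝ, vplus x
      = ∫ u in Set.Ioi x, u ^ (1 - n) * Real.exp (-∫ v in (0:ℝ)..u, v / R v))
    (hcp : ∀ z : ℝ, cplus z = z ^ (n - 1) / R z * Real.exp (∫ v in (0:ℝ)..z, v / R v))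
    (z : ℝ) (hz : 0 < z) :
    (∫ x in Set.Ioi (0:ℝ), (if x ≤ z then cplus z * vplus z else cplus z * vplus x))
      = z ^ (n - 1) / R z * Real.exp (∫ v in (0:ℝ)..z, v / R v)
        * ∫ a in Set.Ioi z, a ^ (2 - n) * Real.exp (-∫ v in (0:ℝ)..a, v / R v) := by
  obtain ⟨hn0, hn2⟩ := hn
  have hr2 : (0:ℝ) < r₂ := lt_of_lt_of_le hr hr'
  -- truncated R
  set R' : ℝ → ℝ := fun v => max r₁ (min r₂ (R v)) with hR'def
  have hR'm : Measurable R' := measurable_const.max (measurable_const.min hR)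
  have hR'lb : ∀ v, r₁ ≤ R' v := fun v => le_max_left _ _
  have hR'ub : ∀ v, R' v ≤ r₂ := fun v => max_le hr' (min_le_left _ _)
  have hR'pos : ∀ v, 0 < R' v := fun v => lt_of_lt_of_le hr (hR'lb v)
  have hR'eq : ∀ v, 0 < v → R' v = R v := by
    intro v hv'
    obtain ⟨h1, h2⟩ := hRb v hv'
    simp [hR'def, min_eq_right h2, max_eq_right h1]
  set f' : ℝ → ℝ := fun v => v / R' v with hf'def
  have hf'm : Measurable f' := measurable_id.div hR'm
  have hf'ii : ∀ a b : ℝ, IntervalIntegrable f' volume a b := by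
    intro a b
    refine IntervalIntegrable.mono_fun' ((continuous_abs.div_const r₁).intervalIntegrable a b)
      hf'm.aestronglyMeasurable ?_
    refine Filter.Eventually.of_forall fun v => ?_
    show ‖v / R' v‖ ≤ |v| / r₁
    rw [Real.norm_eq_abs, abs_div, abs_of_pos (hR'pos v)]
    gcongr <;> first | exact hr | exact hR'lb v
  set F : ℝ → ℝ := fun u => ∫ v in (0:ℝ)..u, f' v with hFdef
  have hFc : Continuous F := intervalIntegral.continuous_primitive hf'ii 0
  have hFeq : ∀ u : ℝ, 0 ≤ u → (∫ v in (0:ℝ)..u, v / R v) = F u := by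
    intro u hu
    apply intervalIntegral.integral_congr
    intro v hv'
    rw [Set.uIcc_of_le hu] at hv'
    rcases eq_or_lt_of_le hv'.1 with h | h
    · simp [hf'def, ← h]
    · simp [hf'def, hR'eq v h]
  have hFlb : ∀ u : ℝ, 0 ≤ u → u ^ 2 / (2 * r₂) ≤ F u := by
    intro u hu
    have h1 : (∫ v in (0:ℝ)..u, v / r₂) ≤ F u := by
      refine intervalIntegral.integral_mono_on hu
        ((continuous_id.div_const r₂).intervalIntegrable 0 u) (hf'ii 0 u) fun v hv' => ?_
      simp only [hf'def, id]
      gcongr <;> first | exact hv'.1 | exact hR'pos v | exact hR'ub v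
    have h2 : (∫ v in (0:ℝ)..u, v / r₂) = u ^ 2 / (2 * r₂) := by
      simp only [div_eq_mul_inv]
      rw [intervalIntegral.integral_mul_const, integral_id]
      ring
    linarith
  set b0 : ℝ := 1 / (2 * r₂) with hb0def
  have hb0 : 0 < b0 := by positivity
  have hexF : ∀ u : ℝ, 0 ≤ u → Real.exp (-F u) ≤ Real.exp (-b0 * u ^ 2) := by
    intro u hu
    apply Real.exp_le_exp.mpr
    have h1 := hFlb u hu
    have h2 : b0 * u ^ 2 = u ^ 2 / (2 * r₂) := by rw [hb0def]; ring
    linarith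
  set φ : ℝ → ℝ := fun u => Real.exp (Real.log u * (1 - n)) * Real.exp (-F u) with hφdef
  have hφm : Measurable φ := ((Real.measurable_log.mul_const _).exp).mul hFc.measurable.neg.exp
  have hφpos : ∀ u, 0 < φ u := fun u => mul_pos (Real.exp_pos _) (Real.exp_pos _)
  have hφrw : ∀ u : ℝ, 0 < u → φ u = u ^ (1 - n) * Real.exp (-F u) := by
    intro u hu
    rw [hφdef]
    simp only
    rw [Real.rpow_def_of_pos hu]
  have hvφ : ∀ x : ℝ, 0 < x → vplus x = ∫ u in Set.Ioi x, φ u := by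
    intro x hx
    rw [hv]
    refine setIntegral_congr_fun measurableSet_Ioi fun u hu => ?_
    have hu0 : 0 < u := hx.trans hu
    rw [hFeq u hu0.le, hφrw u hu0]
  set C : ℝ := z ^ (1 - n) + 1 with hCdef
  have hC0 : (0:ℝ) ≤ C := add_nonneg (Real.rpow_nonneg hz.le _) zero_le_one
  have hBint : ∀ c : ℝ, 0 < c →
      IntegrableOn (fun u => (C + u) * Real.exp (-c * u ^ 2)) (Set.Ioi z) := by
    intro c hc
    have h1 : Integrable (fun u : ℝ =>
        C * Real.exp (-c * u ^ 2) + u ^ (1:ℝ) * Real.exp (-c * u ^ 2)) :=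
      ((integrable_exp_neg_mul_sq hc).const_mul C).add
        (integrable_rpow_mul_exp_neg_mul_sq hc (by norm_num))
    refine h1.integrableOn.congr_fun (fun u _ => ?_) measurableSet_Ioi
    simp only [Real.rpow_one]; ring
  have hφleB : ∀ u ∈ Set.Ioi z, φ u ≤ (C + u) * Real.exp (-b0 * u ^ 2) := by
    intro u hu
    have hu' : z < u := hu
    have hu0 : 0 < u := hz.trans hu'
    rw [hφrw u hu0]
    have h1 : u ^ (1 - n) ≤ C + u := by
      rcases le_or_gt n 1 with h | h
      · rcases le_or_gt u 1 with h2 | h2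
        · have := Real.rpow_le_one hu0.le h2 (by linarith : (0:ℝ) ≤ 1 - n)
          have := Real.rpow_nonneg hz.le (1 - n)
          rw [hCdef]; linarith
        · have h3 : u ^ (1 - n) ≤ u ^ (1:ℝ) :=
            Real.rpow_le_rpow_of_exponent_le h2.le (by linarith)
          rw [Real.rpow_one] at h3
          have := Real.rpow_nonneg hz.le (1 - n)
          rw [hCdef]; linarith
      · have h3 : u ^ (1 - n) ≤ z ^ (1 - n) :=
          Real.rpow_le_rpow_of_nonpos hz hu'.le (by linarith)
        rw [hCdef]; linarith
    have h2 := hexF u hu0.le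
    exact mul_le_mul h1 h2 (Real.exp_pos _).le (by linarith)
  have hφint : IntegrableOn φ (Set.Ioi z) := by
    refine (hBint b0 hb0).mono' hφm.aestronglyMeasurable ?_
    filter_upwards [ae_restrict_mem measurableSet_Ioi] with u hu
    rw [Real.norm_eq_abs, abs_of_pos (hφpos u)]
    exact hφleB u hu
  have huφint : IntegrableOn (fun u => u * φ u) (Set.Ioi z) := by
    have h1 : Integrable (fun u : ℝ =>
        C * (u ^ (1:ℝ) * Real.exp (-b0 * u ^ 2)) + u ^ (2:ℝ) * Real.exp (-b0 * u ^ 2)) :=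
      ((integrable_rpow_mul_exp_neg_mul_sq hb0 (by norm_num)).const_mul C).add
        (integrable_rpow_mul_exp_neg_mul_sq hb0 (by norm_num))
    refine Integrable.mono' h1.integrableOn
      (measurable_id.mul hφm).aestronglyMeasurable ?_
    filter_upwards [ae_restrict_mem measurableSet_Ioi] with u hu
    have hu0 : 0 < u := hz.trans hu
    rw [Real.norm_eq_abs, abs_mul, abs_of_pos hu0, abs_of_pos (hφpos u)]
    calc u * φ u ≤ u * ((C + u) * Real.exp (-b0 * u ^ 2)) :=
          mul_le_mul_of_nonneg_left (hφleB u hu) hu0.le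
      _ = C * (u ^ (1:ℝ) * Real.exp (-b0 * u ^ 2)) + u ^ (2:ℝ) * Real.exp (-b0 * u ^ 2) := by
          rw [Real.rpow_one, show (2:ℝ) = ((2:ℕ):ℝ) by norm_num, Real.rpow_natCast]
          ring
  have hzφint : IntegrableOn (fun u => z * φ u) (Set.Ioi z) := hφint.const_mul z
  have husφint : IntegrableOn (fun u => (u - z) * φ u) (Set.Ioi z) := by
    refine IntegrableOn.congr_fun (huφint.sub hzφint) (fun u _ => ?_) measurableSet_Ioi
    simp only [Pi.sub_apply]
    ring
  have hvnn : ∀ x : ℝ, 0 < x → 0 ≤ vplus x := by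
    intro x hx
    rw [hvφ x hx]
    exact setIntegral_nonneg measurableSet_Ioi fun u _ => (hφpos u).le
  have hvanti : ∀ a b : ℝ, z ≤ a → a ≤ b → vplus b ≤ vplus a := by
    intro a b ha hab
    have ha0 : 0 < a := lt_of_lt_of_le hz ha
    rw [hvφ a ha0, hvφ b (lt_of_lt_of_le ha0 hab)]
    refine setIntegral_mono_set (hφint.mono_set (Set.Ioi_subset_Ioi ha))
      (Filter.Eventually.of_forall fun u => (hφpos u).le)
      (HasSubset.Subset.eventuallyLE (Set.Ioi_subset_Ioi hab))
  have hvmeas : AEStronglyMeasurable vplus (volume.restrict (Set.Ioi z)) := by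
    have hanti : Antitone fun x => vplus (max x z) := fun a b hab =>
      hvanti (max a z) (max b z) (le_max_right a z) (max_le_max hab le_rfl)
    refine hanti.measurable.aestronglyMeasurable.congr ?_
    filter_upwards [ae_restrict_mem measurableSet_Ioi] with x hx
    rw [max_eq_left (le_of_lt hx)]
  set b1 : ℝ := b0 / 2 with hb1def
  have hb1 : 0 < b1 := by positivity
  set D : ℝ := ∫ u in Set.Ioi z, (C + u) * Real.exp (-b1 * u ^ 2) with hDdef
  have hvle : ∀ x ∈ Set.Ioi z, vplus x ≤ Real.exp (-b1 * x ^ 2) * D := by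
    intro x hx
    have hx' : z < x := hx
    have hx0 : 0 < x := hz.trans hx'
    rw [hvφ x hx0]
    have hsub : Set.Ioi x ⊆ Set.Ioi z := Set.Ioi_subset_Ioi hx'.le
    have hint2 : IntegrableOn (fun u => (C + u) * Real.exp (-b1 * u ^ 2)) (Set.Ioi x) :=
      (hBint b1 hb1).mono_set hsub
    calc (∫ u in Set.Ioi x, φ u)
        ≤ ∫ u in Set.Ioi x, Real.exp (-b1 * x ^ 2) * ((C + u) * Real.exp (-b1 * u ^ 2)) := by
          refine setIntegral_mono_on (hφint.mono_set hsub) (hint2.const_mul _)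
            measurableSet_Ioi fun u hu => ?_
          have hxu : x < u := hu
          have hu0 : 0 < u := hx0.trans hxu
          calc φ u ≤ (C + u) * Real.exp (-b0 * u ^ 2) := hφleB u (hsub hu)
            _ = Real.exp (-b1 * u ^ 2) * ((C + u) * Real.exp (-b1 * u ^ 2)) := by
                rw [show -b0 * u ^ 2 = -b1 * u ^ 2 + -b1 * u ^ 2 by rw [hb1def]; ring,
                  Real.exp_add]
                ring
            _ ≤ Real.exp (-b1 * x ^ 2) * ((C + u) * Real.exp (-b1 * u ^ 2)) := by
                refine mul_le_mul_of_nonneg_right (Real.exp_le_exp.mpr (by nlinarith [mul_nonneg (mul_nonneg hb1.le (sub_nonneg.mpr hxu.le)) (by linarith : (0:ℝ) ≤ u + x)])) ?_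
                exact mul_nonneg (by linarith) (Real.exp_pos _).le
      _ = Real.exp (-b1 * x ^ 2) * ∫ u in Set.Ioi x, (C + u) * Real.exp (-b1 * u ^ 2) :=
          integral_const_mul _ _
      _ ≤ Real.exp (-b1 * x ^ 2) * D := by
          refine mul_le_mul_of_nonneg_left ?_ (Real.exp_pos _).le
          refine setIntegral_mono_set (hBint b1 hb1) ?_
            (HasSubset.Subset.eventuallyLE hsub)
          filter_upwards [ae_restrict_mem measurableSet_Ioi] with u hu
          exact mul_nonneg (by linarith [hz.trans (Set.mem_Ioi.mp hu)]) (Real.exp_pos _).le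
  have hvint : IntegrableOn vplus (Set.Ioi z) := by
    refine Integrable.mono' (g := fun x => Real.exp (-b1 * x ^ 2) * D)
      ((integrable_exp_neg_mul_sq hb1).mul_const D).integrableOn hvmeas ?_
    filter_upwards [ae_restrict_mem measurableSet_Ioi] with x hx
    rw [Real.norm_eq_abs, abs_of_nonneg (hvnn x (hz.trans hx))]
    exact hvle x hx
  -- Fubini
  set μz := volume.restrict (Set.Ioi z) with hμzdef
  set f2 : ℝ × ℝ → ℝ := fun p => if p.1 < p.2 then φ p.2 else 0 with hf2def
  have hf2m : Measurable f2 :=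
    Measurable.ite (measurableSet_lt measurable_fst measurable_snd)
      (hφm.comp measurable_snd) measurable_const
  have hf2ind : ∀ x : ℝ, (fun u => f2 (x, u)) = (Set.Ioi x).indicator φ := by
    intro x
    funext u
    simp [hf2def, Set.indicator_apply, Set.mem_Ioi]
  have hinner : ∀ x ∈ Set.Ioi z, (∫ u, f2 (x, u) ∂μz) = vplus x := by
    intro x hx
    rw [hf2ind x, integral_indicator measurableSet_Ioi, hμzdef,
      Measure.restrict_restrict measurableSet_Ioi,
      Set.inter_eq_left.mpr (Set.Ioi_subset_Ioi (le_of_lt hx)), hvφ x (hz.trans hx)]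
  have hf2int : Integrable (Function.uncurry fun x u => f2 (x, u)) (μz.prod μz) := by
    have hmeas : AEStronglyMeasurable (Function.uncurry fun x u => f2 (x, u)) (μz.prod μz) :=
      hf2m.aestronglyMeasurable
    rw [integrable_prod_iff hmeas]
    constructor
    · refine Filter.Eventually.of_forall fun x => ?_
      show Integrable (fun u => f2 (x, u)) μz
      rw [hf2ind x]
      exact hφint.indicator measurableSet_Ioi
    · refine hvint.congr ?_
      filter_upwards [ae_restrict_mem measurableSet_Ioi] with x hx
      have h1 : (fun u => f2 (x, u)) =ᵐ[μz] fun u => ‖f2 (x, u)‖ := by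
        refine Filter.Eventually.of_forall fun u => ?_
        show f2 (x, u) = ‖f2 (x, u)‖
        rw [Real.norm_eq_abs, eq_comm, abs_of_nonneg]
        by_cases h : x < u
        · simp [hf2def, h, (hφpos u).le]
        · simp [hf2def, h]
      show vplus x = ∫ u, ‖f2 (x, u)‖ ∂μz
      rw [← integral_congr_ae h1, hinner x hx]
  have hswap := integral_integral_swap hf2int
  have hL : (∫ x, (∫ u, f2 (x, u) ∂μz) ∂μz) = ∫ x in Set.Ioi z, vplus x := by
    refine integral_congr_ae ?_
    filter_upwards [ae_restrict_mem measurableSet_Ioi] with x hx using hinner x hx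
  have hR2 : (∫ u, (∫ x, f2 (x, u) ∂μz) ∂μz) = ∫ u in Set.Ioi z, (u - z) * φ u := by
    refine integral_congr_ae ?_
    filter_upwards [ae_restrict_mem measurableSet_Ioi] with u hu
    have h1 : (fun x => f2 (x, u)) = (Set.Iio u).indicator fun _ => φ u := by
      funext x
      simp [hf2def, Set.indicator_apply, Set.mem_Iio]
    rw [h1, integral_indicator measurableSet_Iio, setIntegral_const, measureReal_def, hμzdef,
      Measure.restrict_apply measurableSet_Iio, Set.Iio_inter_Ioi, Real.volume_Ioo,
      ENNReal.toReal_ofReal (by linarith [Set.mem_Ioi.mp hu] : (0:ℝ) ≤ u - z), smul_eq_mul]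
  have hFub : (∫ x in Set.Ioi z, vplus x) = ∫ u in Set.Ioi z, (u - z) * φ u := by
    rw [← hL, hswap, hR2]
  -- assembly
  rw [← hcp z]
  have hg1 : IntegrableOn (fun x => if x ≤ z then cplus z * vplus z else cplus z * vplus x)
      (Set.Ioc 0 z) := by
    have hconst : IntegrableOn (fun _ : ℝ => cplus z * vplus z) (Set.Ioc 0 z) volume :=
      (integrableOn_const_iff).mpr (Or.inr measure_Ioc_lt_top)
    refine IntegrableOn.congr_fun hconst (fun x hx => ?_) measurableSet_Ioc
    simp [hx.2]
  have hg2 : IntegrableOn (fun x => if x ≤ z then cplus z * vplus z else cplus z * vplus x)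
      (Set.Ioi z) := by
    refine IntegrableOn.congr_fun (hvint.const_mul (cplus z)) (fun x hx => ?_) measurableSet_Ioi
    simp [not_le.mpr (Set.mem_Ioi.mp hx)]
  have hsplit : (∫ x in Set.Ioi (0:ℝ),
        (if x ≤ z then cplus z * vplus z else cplus z * vplus x))
      = (∫ x in Set.Ioc (0:ℝ) z, (if x ≤ z then cplus z * vplus z else cplus z * vplus x))
        + ∫ x in Set.Ioi z, (if x ≤ z then cplus z * vplus z else cplus z * vplus x) := by
    rw [← Set.Ioc_union_Ioi_eq_Ioi hz.le]
    exact setIntegral_union (Set.Ioc_disjoint_Ioi le_rfl) measurableSet_Ioi hg1 hg2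
  have h5 : (∫ x in Set.Ioc (0:ℝ) z,
      (if x ≤ z then cplus z * vplus z else cplus z * vplus x)) = z * (cplus z * vplus z) := by
    rw [setIntegral_congr_fun (g := fun _ => cplus z * vplus z) measurableSet_Ioc
      (fun x hx => by simp [hx.2]), setIntegral_const, measureReal_def, Real.volume_Ioc, sub_zero,
      ENNReal.toReal_ofReal hz.le, smul_eq_mul]
  have h6 : (∫ x in Set.Ioi z, (if x ≤ z then cplus z * vplus z else cplus z * vplus x))
      = cplus z * ∫ x in Set.Ioi z, vplus x := by
    rw [setIntegral_congr_fun (g := fun x => cplus z * vplus x) measurableSet_Ioi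
      (fun x hx => by simp [not_le.mpr (Set.mem_Ioi.mp hx)]), integral_const_mul]
  have h7 : z * vplus z = ∫ u in Set.Ioi z, z * φ u := by
    rw [hvφ z hz, integral_const_mul]
  have h8 : (∫ u in Set.Ioi z, z * φ u) + (∫ u in Set.Ioi z, (u - z) * φ u)
      = ∫ u in Set.Ioi z, u * φ u := by
    rw [← integral_add hzφint husφint]
    exact setIntegral_congr_fun measurableSet_Ioi fun u _ => by ring
  have h9 : (∫ a in Set.Ioi z, a ^ (2 - n) * Real.exp (-∫ v in (0:ℝ)..a, v / R v))
      = ∫ u in Set.Ioi z, u * φ u := by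
    refine setIntegral_congr_fun measurableSet_Ioi fun a ha => ?_
    have ha0 : 0 < a := hz.trans ha
    rw [hFeq a ha0.le, hφrw a ha0,
      show (2 - n) = 1 + (1 - n) by ring, Real.rpow_add ha0, Real.rpow_one]
    ring
  rw [hsplit, h5, h6, hFub, h9, ← h8, ← h7]
  ring
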